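/- For the dihedral group D_{2n} of order 2n, the number of subgroups is |L(D_{2n})| = σ(n) + τ(n), where σ(n) is the sum of the divisors of n and τ(n) is the number of divisors of n. -/

import Mathlib

open scoped Pointwise

def permutizer {G : Type*} [Group G] (X : Subgroup G) : Subgroup G :=
  Subgroup.closure {g : G |
    (Subgroup.zpowers g : Set G) * (X : Set G) = (X : Set G) * (Subgroup.zpowers g : Set G)}

noncomputable def pd (G : Type*) [Group G] : ℚ :=
  (∑ᶠ X : Subgroup G, (Nat.card ↥(permutizer X) : ℚ)) /
    ((Nat.card G : ℚ) * (Nat.card (Subgroup G) : ℚ))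

noncomputable def PP (G : Type*) [Group G] : Subgroup G :=
  ⨅ H : Subgroup G, permutizer H

set_option linter.unusedSectionVars false

namespace DihedralCount

open AddSubgroup

variable {n : ℕ} [NeZero n]

-- card of zmultiples of n/d
lemma card_zmultiples_div {d : ℕ} (hd : d ∣ n) :
    Nat.card (zmultiples ((n / d : ℕ) : ZMod n)) = d := by
  have hn : n ≠ 0 := NeZero.ne n
  have hd0 : d ≠ 0 := by rintro rfl; simp at hd; exact hn hd
  rw [Nat.card_zmultiples, ZMod.addOrderOf_coe _ hn,
    Nat.gcd_eq_right (Nat.div_dvd_of_dvd hd), Nat.div_div_self hd hn]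

lemma addsubgroup_eq (A : AddSubgroup (ZMod n)) :
    A = zmultiples ((n / Nat.card A : ℕ) : ZMod n) := by
  have hn : n ≠ 0 := NeZero.ne n
  set d := Nat.card A with hdA
  have hd : d ∣ n := by
    have := AddSubgroup.card_addSubgroup_dvd_card A
    simpa [Nat.card_eq_fintype_card, ZMod.card] using this
  have hd0 : d ≠ 0 := Nat.card_pos.ne'
  refine AddSubgroup.eq_of_le_of_card_ge ?_ ?_
  · intro x hx
    have h1 : d • x = 0 := by
      have : addOrderOf (⟨x, hx⟩ : A) ∣ d := addOrderOf_dvd_natCard _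
      have h2 : d • (⟨x, hx⟩ : A) = 0 := by
        rwa [← addOrderOf_dvd_iff_nsmul_eq_zero]
      exact congrArg Subtype.val h2
    -- translate to divisibility
    have hx' : ((x.val : ℕ) : ZMod n) = x := ZMod.natCast_rightInverse x
    have : ((d * x.val : ℕ) : ZMod n) = 0 := by
      push_cast
      rw [hx', ← nsmul_eq_mul]
      exact h1
    have hdvd : n ∣ d * x.val := (ZMod.natCast_eq_zero_iff _ _).mp this
    have hdvd2 : n / d ∣ x.val := by
      have h3 : d * (n / d) ∣ d * x.val := by rwa [Nat.mul_div_cancel' hd]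
      exact (mul_dvd_mul_iff_left (by exact_mod_cast hd0 : (d:ℕ) ≠ 0)).mp h3
    obtain ⟨k, hk⟩ := hdvd2
    refine mem_zmultiples_iff.mpr ⟨(k : ℤ), ?_⟩
    rw [← hx', hk]
    push_cast
    rw [zsmul_eq_mul]
    push_cast
    ring
  · rw [card_zmultiples_div hd]

noncomputable def divisorsEquivAddSubgroup :
    {d // d ∈ n.divisors} ≃ AddSubgroup (ZMod n) := by
  have hn : n ≠ 0 := NeZero.ne n
  refine Equiv.ofBijective
    (fun d => zmultiples ((n / d.1 : ℕ) : ZMod n)) ⟨?_, ?_⟩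
  · intro d e h
    have hd := card_zmultiples_div (Nat.mem_divisors.mp d.2).1
    have he := card_zmultiples_div (Nat.mem_divisors.mp e.2).1
    have h' : zmultiples ((n / d.1 : ℕ) : ZMod n) = zmultiples ((n / e.1 : ℕ) : ZMod n) := h
    rw [h'] at hd
    exact Subtype.ext (hd.symm.trans he)
  · intro A
    have hd : Nat.card A ∣ n := by
      have := AddSubgroup.card_addSubgroup_dvd_card A
      simpa [Nat.card_eq_fintype_card, ZMod.card] using this
    exact ⟨⟨Nat.card A, Nat.mem_divisors.mpr ⟨hd, hn⟩⟩, (addsubgroup_eq A).symm⟩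

lemma divisorsEquivAddSubgroup_card (d : {d // d ∈ n.divisors}) :
    Nat.card (divisorsEquivAddSubgroup d) = d.1 :=
  card_zmultiples_div (Nat.mem_divisors.mp d.2).1

open DihedralGroup

lemma mk_eq_mk_iff {A : AddSubgroup (ZMod n)} {a b : ZMod n} :
    (a : ZMod n ⧸ A) = (b : ZMod n ⧸ A) ↔ a - b ∈ A := by
  rw [QuotientAddGroup.eq, neg_add_eq_sub, ← neg_sub a b, neg_mem_iff]

/-- predicate for membership -/
def rmem (A : AddSubgroup (ZMod n)) : DihedralGroup n → Prop
  | r i => i ∈ A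
  | sr _ => False

def mmem (A : AddSubgroup (ZMod n)) (q : ZMod n ⧸ A) : DihedralGroup n → Prop
  | r i => i ∈ A
  | sr j => (j : ZMod n ⧸ A) = q

def rsub (A : AddSubgroup (ZMod n)) : Subgroup (DihedralGroup n) where
  carrier := {x | rmem A x}
  one_mem' := A.zero_mem
  mul_mem' := by
    rintro (a | a) (b | b) ha hb <;> simp only [rmem, Set.mem_setOf_eq] at * <;>
      first
      | exact A.add_mem ha hb
      | exact hb.elim
      | exact ha.elim
  inv_mem' := by
    rintro (a | a) ha <;> simp only [rmem, Set.mem_setOf_eq] at * <;>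
      first
      | exact A.neg_mem ha
      | exact ha.elim

def msub (A : AddSubgroup (ZMod n)) (q : ZMod n ⧸ A) : Subgroup (DihedralGroup n) where
  carrier := {x | mmem A q x}
  one_mem' := A.zero_mem
  mul_mem' := by
    rintro (a | a) (b | b) ha hb
    <;> simp only [Set.mem_setOf_eq] at ha hb
    · exact A.add_mem ha hb
    · show ((b - a : ZMod n) : ZMod n ⧸ A) = q
      rw [← (hb : ((b : ZMod n ⧸ A)) = q), mk_eq_mk_iff]
      simpa using A.neg_mem ha
    · show ((a + b : ZMod n) : ZMod n ⧸ A) = q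
      rw [← (ha : ((a : ZMod n ⧸ A)) = q), mk_eq_mk_iff]
      simpa using (show b ∈ A from hb)
    · show b - a ∈ A
      have : ((a : ZMod n ⧸ A)) = ((b : ZMod n ⧸ A)) :=
        (ha : ((a : ZMod n ⧸ A)) = q).trans (hb : ((b : ZMod n ⧸ A)) = q).symm
      rw [mk_eq_mk_iff] at this
      simpa using A.neg_mem this
  inv_mem' := by
    rintro (a | a) ha <;> simp only [Set.mem_setOf_eq] at ha
    · exact A.neg_mem ha
    · exact ha

@[simp] lemma r_mem_rsub {A : AddSubgroup (ZMod n)} {i : ZMod n} :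
    r i ∈ rsub A ↔ i ∈ A := Iff.rfl

@[simp] lemma sr_mem_rsub {A : AddSubgroup (ZMod n)} {i : ZMod n} :
    sr i ∈ rsub A ↔ False := Iff.rfl

@[simp] lemma r_mem_msub {A : AddSubgroup (ZMod n)} {q : ZMod n ⧸ A} {i : ZMod n} :
    r i ∈ msub A q ↔ i ∈ A := Iff.rfl

@[simp] lemma sr_mem_msub {A : AddSubgroup (ZMod n)} {q : ZMod n ⧸ A} {i : ZMod n} :
    sr i ∈ msub A q ↔ (i : ZMod n ⧸ A) = q := Iff.rfl

def rotPart (H : Subgroup (DihedralGroup n)) : AddSubgroup (ZMod n) where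
  carrier := {i | r i ∈ H}
  zero_mem' := H.one_mem
  add_mem' := by
    intro a b ha hb
    simpa using H.mul_mem ha hb
  neg_mem' := by
    intro a ha
    have := H.inv_mem ha
    exact this

def F : (AddSubgroup (ZMod n)) ⊕ (Σ A : AddSubgroup (ZMod n), ZMod n ⧸ A) →
    Subgroup (DihedralGroup n)
  | .inl A => rsub A
  | .inr ⟨A, q⟩ => msub A q

lemma F_injective : Function.Injective (F (n := n)) := by
  rintro (A | ⟨A, q⟩) (B | ⟨B, q'⟩) h <;> simp only [F] at h
  · congr 1
    ext i
    constructor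
    · intro hi
      have : r i ∈ rsub B := h ▸ (r_mem_rsub.mpr hi)
      exact r_mem_rsub.mp this
    · intro hi
      have : r i ∈ rsub A := h ▸ (r_mem_rsub.mpr hi)
      exact r_mem_rsub.mp this
  · exfalso
    obtain ⟨j, rfl⟩ := QuotientAddGroup.mk_surjective q'
    have : sr j ∈ msub B ((j : ZMod n ⧸ B)) := sr_mem_msub.mpr rfl
    have : sr j ∈ rsub A := h ▸ this
    exact this
  · exfalso
    obtain ⟨j, rfl⟩ := QuotientAddGroup.mk_surjective q
    have : sr j ∈ msub A ((j : ZMod n ⧸ A)) := sr_mem_msub.mpr rfl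
    have : sr j ∈ rsub B := h ▸ this
    exact this
  · have hAB : A = B := by
      ext i
      constructor
      · intro hi
        have : r i ∈ msub B q' := h ▸ (r_mem_msub.mpr hi)
        exact r_mem_msub.mp this
      · intro hi
        have : r i ∈ msub A q := h ▸ (r_mem_msub.mpr hi)
        exact r_mem_msub.mp this
  -- now show q = q'
    subst hAB
    obtain ⟨j, rfl⟩ := QuotientAddGroup.mk_surjective q
    have : sr j ∈ msub A ((j : ZMod n ⧸ A)) := sr_mem_msub.mpr rfl
    have h2 : sr j ∈ msub A q' := h ▸ this
    have : ((j : ZMod n ⧸ A)) = q' := sr_mem_msub.mp h2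
    rw [this]

lemma F_surjective : Function.Surjective (F (n := n)) := by
  intro H
  by_cases h : ∃ j, sr j ∈ H
  · obtain ⟨j, hj⟩ := h
    refine ⟨.inr ⟨rotPart H, ((j : ZMod n ⧸ rotPart H))⟩, ?_⟩
    show msub _ _ = H
    ext (i | i)
    · exact Iff.rfl
    · rw [sr_mem_msub, mk_eq_mk_iff]
      show r (i - j) ∈ H ↔ sr i ∈ H
      constructor
      · intro hr
        have := H.mul_mem hj hr
        simpa using this
      · intro hi
        have := H.mul_mem hj hi
        simpa using this
  · refine ⟨.inl (rotPart H), ?_⟩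
    show rsub _ = H
    ext (i | i)
    · exact Iff.rfl
    · simp only [sr_mem_rsub, false_iff]
      exact fun hi => h ⟨i, hi⟩

lemma nat_card_sigma {ι : Type*} [Fintype ι] (Q : ι → Type*) [∀ i, Finite (Q i)] :
    Nat.card (Σ i, Q i) = ∑ i, Nat.card (Q i) := by
  classical
  have : ∀ i, Fintype (Q i) := fun i => Fintype.ofFinite _
  simp [Nat.card_eq_fintype_card, Fintype.card_sigma]

lemma card_quot (d : {d // d ∈ n.divisors}) :
    Nat.card (ZMod n ⧸ (divisorsEquivAddSubgroup d : AddSubgroup (ZMod n))) = n / d.1 := by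
  have h := AddSubgroup.card_eq_card_quotient_mul_card_addSubgroup
    (divisorsEquivAddSubgroup d : AddSubgroup (ZMod n))
  rw [divisorsEquivAddSubgroup_card] at h
  have hn : Nat.card (ZMod n) = n := Nat.card_zmod n
  rw [hn] at h
  have hd0 : 0 < d.1 := Nat.pos_of_mem_divisors d.2
  exact (Nat.div_eq_of_eq_mul_left hd0 h).symm

theorem card_subgroup_dihedral' :
    Nat.card (Subgroup (DihedralGroup n)) = n.divisors.sum id + n.divisors.card := by
  haveI : Finite (AddSubgroup (ZMod n)) :=
    Finite.of_injective (fun A => (A : Set (ZMod n))) SetLike.coe_injective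
  have e := Equiv.ofBijective (F (n := n)) ⟨F_injective, F_surjective⟩
  rw [← Nat.card_congr e, Nat.card_sum]
  have h1 : Nat.card (AddSubgroup (ZMod n)) = n.divisors.card := by
    rw [← Nat.card_congr (divisorsEquivAddSubgroup (n := n)), Nat.card_eq_fintype_card,
      Fintype.card_coe]
  have h2 : Nat.card (Σ A : AddSubgroup (ZMod n), ZMod n ⧸ A) = n.divisors.sum id := by
    rw [← Nat.card_congr (Equiv.sigmaCongrLeft (β := fun A : AddSubgroup (ZMod n) => ZMod n ⧸ A)
      (divisorsEquivAddSubgroup (n := n))), nat_card_sigma]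
    calc ∑ d : {d // d ∈ n.divisors}, Nat.card (ZMod n ⧸ (divisorsEquivAddSubgroup d))
        = ∑ d : {d // d ∈ n.divisors}, n / d.1 := by
          exact Finset.sum_congr rfl fun d _ => card_quot d
      _ = ∑ d ∈ n.divisors, n / d := Finset.sum_coe_sort n.divisors _
      _ = n.divisors.sum id := Nat.sum_div_divisors n id
  rw [h1, h2, Nat.add_comm]

end DihedralCount

theorem card_subgroup_dihedral (n : ℕ) (hn : 1 ≤ n) :
    Nat.card (Subgroup (DihedralGroup n)) = n.divisors.sum id + n.divisors.card := by
  haveI : NeZero n := ⟨by omega⟩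
  exact DihedralCount.card_subgroup_dihedral'
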